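/- For a big-step semantics: c ⇒ wrong is inductively derivable in the wrong-extended rules if and only if the initial partial evaluation tree with single node c ⇒ ? reaches, in finitely many transition steps, a stuck partial evaluation tree (one that is irreducible and whose root judgement is incomplete). -/

import Mathlib

/-- Judgements over configurations `C` and extended results `Option R`
    (`none` stands for the special extra result such as `?`, `wrong`, or `∞`). -/
abbrev Judg (C R : Type) := C × Option R

/-- Lift a complete judgement to an extended judgement. -/
def liftJ {C R : Type} (j : C × R) : Judg C R := (j.1, some j.2)

/-- Bounded-premises condition. -/
def BP {C R : Type} (Rules : Set (List (C × R) × (C × R))) : Prop :=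
  ∀ c : C, ∃ b : ℕ, ∀ js res, (js, (c, res)) ∈ Rules → js.length ≤ b

/-- The extended rule set `Rules_?`: original rules (lifted), start axioms
    `c ⇒ ?`, and partial rules. -/
def RulesQ {C R : Type} (Rules : Set (List (C × R) × (C × R))) :
    Set (List (Judg C R) × Judg C R) :=
  { r | (∃ c : C, r = ([], (c, none)))
      ∨ (∃ (js : List (C × R)) (c : C) (res : R), (js, (c, res)) ∈ Rules ∧ r = (js.map liftJ, (c, some res)))
      ∨ (∃ (js : List (C × R)) (c : C) (res : R) (i : ℕ) (hi : i < js.length) (u : Option R),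
          (js, (c, res)) ∈ Rules ∧
          r = ((js.take i).map liftJ ++ [((js[i]'hi).1, u)], (c, none))) }

/-- Ordered trees labelled in `L`: partial functions from positions (lists of
    child indices) to labels, with nonempty, prefix-closed,
    sibling-downward-closed domain. -/
structure OTree (L : Type) where
  label : List ℕ → Option L
  root_isSome : (label []).isSome
  pref : ∀ α n, (label (α ++ [n])).isSome → (label α).isSome
  sib : ∀ α n k, (label (α ++ [n])).isSome → k ≤ n → (label (α ++ [k])).isSome

/-- A tree is an evaluation tree in a rule set: at every node, the ordered
    children labels together with the node label form a rule. -/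
def IsTreeIn {L : Type} (Rules : Set (List L × L)) (t : OTree L) : Prop :=
  ∀ α l, t.label α = some l →
    ∃ ps : List L, (∀ i : ℕ, t.label (α ++ [i]) = ps[i]?) ∧ (ps, l) ∈ Rules

/-- Partial evaluation trees: evaluation trees in `Rules_?`. -/
def IsPET {C R : Type} (Rules : Set (List (C × R) × (C × R)))
    (t : OTree (Judg C R)) : Prop :=
  IsTreeIn (RulesQ Rules) t

/-- The refinement relation `⊑` on trees labelled by possibly-incomplete
    judgements. -/
def TreeLE {C R : Type} (t t' : OTree (Judg C R)) : Prop :=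
  (∀ α, (t.label α).isSome → (t'.label α).isSome) ∧
  ∀ α c u, t.label α = some (c, u) →
    (∃ (u' : Option R), t'.label α = some (c, u')) ∧
    (u.isSome → ∀ β, t.label (α ++ β) = t'.label (α ++ β))

/-- Strict refinement `⊏`. -/
def TreeLT {C R : Type} (t t' : OTree (Judg C R)) : Prop :=
  TreeLE t t' ∧ t ≠ t'

/-- A tree is finite if its domain is finite. -/
def TreeFinite {L : Type} (t : OTree L) : Prop :=
  Set.Finite {α | (t.label α).isSome}

/-- Well-formedness: every subtree rooted at a complete node is finite. -/
def WellFormed {C R : Type} (t : OTree (Judg C R)) : Prop :=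
  ∀ α c r, t.label α = some (c, some r) →
    Set.Finite {β | (t.label (α ++ β)).isSome}

/-- `t` is a least upper bound of the sequence `f` w.r.t. `⊑`. -/
def IsLubSeq {C R : Type} (f : ℕ → OTree (Judg C R)) (t : OTree (Judg C R)) : Prop :=
  (∀ n, TreeLE (f n) t) ∧ ∀ t', (∀ n, TreeLE (f n) t') → TreeLE t t'

/-- Inductive derivability in a rule set with finite-list premises. -/
inductive IndDerives {J : Type} (Rules : Set (List J × J)) : J → Prop where
  | node (ps : List J) (j : J) : (ps, j) ∈ Rules →
      (∀ p ∈ ps, IndDerives Rules p) → IndDerives Rules j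

/-- A set of judgements is consistent w.r.t. a rule set. -/
def ConsistentL {J : Type} (Rules : Set (List J × J)) (X : Set J) : Prop :=
  ∀ j ∈ X, ∃ (ps : List J), (ps, j) ∈ Rules ∧ ∀ p ∈ ps, p ∈ X

/-- Coinductive derivability: membership in some consistent set. -/
def CoDerives {J : Type} (Rules : Set (List J × J)) (j : J) : Prop :=
  ∃ (X : Set J), ConsistentL Rules X ∧ j ∈ X

/-- Derivability in a generalised inference system (rules + corules):
    membership in a consistent set all of whose elements have a finite
    derivation using both rules and corules. -/
def GenDerives {J : Type} (rules corules : Set (List J × J)) (j : J) : Prop :=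
  ∃ (X : Set J), ConsistentL rules X ∧ (∀ x ∈ X, IndDerives (rules ∪ corules) x) ∧ j ∈ X
/-- The single-node tree. -/
def leafT {L : Type} (l : L) : OTree L where
  label α := if α = [] then some l else none
  root_isSome := by simp
  pref := by
    intro α n h
    simp at h
  sib := by
    intro α n k h _
    simp at h

/-- The tree with root label `l` and ordered list of immediate subtrees `ts`. -/
def nodeT {L : Type} (l : L) (ts : List (OTree L)) : OTree L where
  label α :=
    match α with
    | [] => some l
    | i :: β => (ts[i]?).bind fun t => t.label β
  root_isSome := by simp
  pref := by
    intro α n h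
    match α with
    | [] => rfl
    | i :: β =>
      replace h : (ts[i]?.bind fun t => t.label (β ++ [n])).isSome = true := h
      show (ts[i]?.bind fun t => t.label β).isSome = true
      rcases hts : ts[i]? with _ | t
      · rw [hts] at h; simp at h
      · rw [hts] at h
        simpa using t.pref β n (by simpa using h)
  sib := by
    intro α n k h hk
    match α with
    | [] =>
      replace h : (ts[n]?.bind fun t => t.label []).isSome = true := h
      show (ts[k]?.bind fun t => t.label []).isSome = true
      rcases hts : ts[n]? with _ | t
      · rw [hts] at h; simp at h
      · have hn : n < ts.length := by
          by_contra hc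
          rw [List.getElem?_eq_none (by omega)] at hts
          simp at hts
        have hk' : k < ts.length := lt_of_le_of_lt hk hn
        rw [List.getElem?_eq_getElem hk']
        simpa using (ts[k]'hk').root_isSome
    | i :: β =>
      replace h : (ts[i]?.bind fun t => t.label (β ++ [n])).isSome = true := h
      show (ts[i]?.bind fun t => t.label (β ++ [k])).isSome = true
      rcases hts : ts[i]? with _ | t
      · rw [hts] at h; simp at h
      · rw [hts] at h
        simpa using t.sib β n k (by simpa using h) hk

/-- The transition relation on (finite) partial evaluation trees. -/
inductive Step {C R : Type} (Rules : Set (List (C × R) × (C × R))) :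
    OTree (Judg C R) → OTree (Judg C R) → Prop where
  | tr1 (c : C) (r : R) (h : ([], (c, r)) ∈ Rules) :
      Step Rules (leafT (c, none)) (leafT (c, some r))
  | tr2 (js : List (C × R)) (c : C) (res : R) (hne : js ≠ [])
      (h : (js, (c, res)) ∈ Rules) :
      Step Rules (leafT (c, none))
        (nodeT (c, none) [leafT ((js.head hne).1, none)])
  | tr3 (js : List (C × R)) (c : C) (res : R) (trs : List (OTree (Judg C R)))
      (h : (js, (c, res)) ∈ Rules) (hlen : trs.length = js.length)
      (hroots : ∀ (k : ℕ) (hk : k < js.length),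
        ∃ (t : OTree (Judg C R)), trs[k]? = some t ∧
          t.label [] = some (liftJ (js[k]'hk))) :
      Step Rules (nodeT (c, none) trs) (nodeT (c, some res) trs)
  | tr4 (js : List (C × R)) (c : C) (res : R) (trs : List (OTree (Judg C R)))
      (h : (js, (c, res)) ∈ Rules) (hne : trs ≠ [])
      (hlt : trs.length < js.length)
      (hroots : ∀ (k : ℕ) (hk : k < trs.length),
        ∃ (t : OTree (Judg C R)), trs[k]? = some t ∧
          t.label [] = some (liftJ (js[k]'(Nat.lt_trans hk hlt)))) :
      Step Rules (nodeT (c, none) trs)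
        (nodeT (c, none) (trs ++ [leafT ((js[trs.length]'hlt).1, none)]))
  | tr5 (js : List (C × R)) (c : C) (res : R) (trs : List (OTree (Judg C R)))
      (t t' : OTree (Judg C R))
      (h : (js, (c, res)) ∈ Rules)
      (hlt : trs.length < js.length)
      (hroots : ∀ (k : ℕ) (hk : k < trs.length),
        ∃ (s : OTree (Judg C R)), trs[k]? = some s ∧
          s.label [] = some (liftJ (js[k]'(Nat.lt_trans hk hlt))))
      (hconf : t.label [] = some ((js[trs.length]'hlt).1, none))
      (hstep : Step Rules t t') :
      Step Rules (nodeT (c, none) (trs ++ [t])) (nodeT (c, none) (trs ++ [t']))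
/-- Trace results: a finite trace paired with a result, or an infinite trace. -/
abbrev TrRes (C R : Type) := (List C × R) ⊕ Stream' C

/-- The trace-extended rule set `Rules_tr`: finite-trace rules and
    infinite-trace rules. -/
def RulesTr {C R : Type} (Rules : Set (List (C × R) × (C × R))) :
    Set (List (C × TrRes C R) × (C × TrRes C R)) :=
  { r | (∃ (js : List (C × R)) (c : C) (res : R) (σs : List (List C)),
          (js, (c, res)) ∈ Rules ∧ σs.length = js.length ∧
          r = ((js.zip σs).map (fun p => (p.1.1, Sum.inl (p.2, p.1.2))),
               (c, Sum.inl (c :: σs.flatten, res))))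
      ∨ (∃ (js : List (C × R)) (c : C) (res : R) (i : ℕ) (hi : i < js.length)
            (σs : List (List C)) (σ : Stream' C),
          (js, (c, res)) ∈ Rules ∧ σs.length = i ∧
          r = (((js.take i).zip σs).map (fun p => (p.1.1, Sum.inl (p.2, p.1.2))) ++
                 [((js[i]'hi).1, Sum.inr σ)],
               (c, Sum.inr ((c :: σs.flatten) ++ₛ σ)))) }

/-- Equality of rules up to an index `i`: same conclusion configuration, same
    first `i` premises, same configuration in the `(i+1)`-th premise
    (`i` is 0-based here), with a prescribed result `r'` in that premise. -/
def AgreeUpTo {C R : Type} (Rules : Set (List (C × R) × (C × R)))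
    (js : List (C × R)) (c : C) (i : ℕ) (hi : i < js.length) (r' : R) : Prop :=
  ∃ (js' : List (C × R)) (res' : R) (hi' : i < js'.length),
    (js', (c, res')) ∈ Rules ∧ js'.take i = js.take i ∧
    (js'[i]'hi').1 = (js[i]'hi).1 ∧ (js'[i]'hi').2 = r'

/-- The wrong-extended rule set `Rules_wr` over results `R + {wrong}`
    (`none` stands for `wrong`): original rules, wrong-configuration axioms,
    wrong-result rules and wrong-propagation rules. -/
def RulesWr {C R : Type} (Rules : Set (List (C × R) × (C × R))) :
    Set (List (Judg C R) × Judg C R) :=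
  { r | (∃ (js : List (C × R)) (c : C) (res : R),
          (js, (c, res)) ∈ Rules ∧ r = (js.map liftJ, (c, some res)))
      ∨ (∃ (c : C), (¬ ∃ (js : List (C × R)) (res : R), (js, (c, res)) ∈ Rules) ∧
          r = ([], (c, none)))
      ∨ (∃ (js : List (C × R)) (c : C) (res : R) (i : ℕ) (hi : i < js.length) (r' : R),
          (js, (c, res)) ∈ Rules ∧ ¬ AgreeUpTo Rules js c i hi r' ∧
          r = ((js.take i).map liftJ ++ [((js[i]'hi).1, some r')], (c, none)))
      ∨ (∃ (js : List (C × R)) (c : C) (res : R) (i : ℕ) (hi : i < js.length),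
          (js, (c, res)) ∈ Rules ∧
          r = ((js.take i).map liftJ ++ [((js[i]'hi).1, none)], (c, none))) }

/-- The divergence-extended rule set `Rules_∞` over results `R + {∞}`
    (`none` stands for `∞`): original rules plus divergence-propagation
    rules. -/
def RulesInf {C R : Type} (Rules : Set (List (C × R) × (C × R))) :
    Set (List (Judg C R) × Judg C R) :=
  { r | (∃ (js : List (C × R)) (c : C) (res : R),
          (js, (c, res)) ∈ Rules ∧ r = (js.map liftJ, (c, some res)))
      ∨ (∃ (js : List (C × R)) (c : C) (res : R) (i : ℕ) (hi : i < js.length),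
          (js, (c, res)) ∈ Rules ∧
          r = ((js.take i).map liftJ ++ [((js[i]'hi).1, none)], (c, none))) }

/-- The coaxioms for divergence: `c ⇒ ∞` for every configuration `c`. -/
def CoAx (C R : Type) : Set (List (Judg C R) × Judg C R) :=
  { r | ∃ (c : C), r = ([], (c, none)) }

/-- The trace-forgetting map: `(σ, r) ↦ r` and `σ^∞ ↦ ∞`. -/
def uForget {C R : Type} : TrRes C R → Option R :=
  Sum.elim (fun p => some p.2) (fun _ => none)

section Aux

variable {C R : Type} {Rules : Set (List (C × R) × (C × R))}

theorem OTree.ext' {L : Type} {t t' : OTree L} (h : t.label = t'.label) : t = t' := by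
  cases t; cases t'; simp_all

@[simp] theorem leafT_label {L : Type} (l : L) (α : List ℕ) :
    (leafT l).label α = if α = [] then some l else none := rfl

@[simp] theorem nodeT_label_nil {L : Type} (l : L) (ts : List (OTree L)) :
    (nodeT l ts).label [] = some l := rfl

theorem nodeT_label_cons {L : Type} (l : L) (ts : List (OTree L)) (i : ℕ) (β : List ℕ) :
    (nodeT l ts).label (i :: β) = (ts[i]?).bind (fun t => t.label β) := rfl

theorem liftJ_inj {j j' : C × R} (h : liftJ j = liftJ j') : j = j' := by
  cases j; cases j'; simp [liftJ] at h; simp [h]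

theorem nodeT_inj {L : Type} {l l' : L} {ts ts' : List (OTree L)}
    (h : nodeT l ts = nodeT l' ts') : l = l' ∧ ts = ts' := by
  have hl : ∀ α, (nodeT l ts).label α = (nodeT l' ts').label α := fun α => by rw [h]
  constructor
  · have := hl []; simpa using this
  · apply List.ext_getElem?
    intro i
    have hi := hl [i]
    rw [nodeT_label_cons, nodeT_label_cons] at hi
    rcases h1 : ts[i]? with _ | t <;> rcases h2 : ts'[i]? with _ | t'
    · rfl
    · rw [h1, h2] at hi; simp at hi
      have := t'.root_isSome; rw [← hi] at this; simp at this
    · rw [h1, h2] at hi; simp at hi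
      have := t.root_isSome; rw [hi] at this; simp at this
    · congr 1
      apply OTree.ext'
      funext β
      have hβ := hl (i :: β)
      rw [nodeT_label_cons, nodeT_label_cons, h1, h2] at hβ
      simpa using hβ

theorem not_leafT_eq_nodeT {L : Type} {l l' : L} {ts : List (OTree L)} (hts : ts ≠ [])
    (h : leafT l = nodeT l' ts) : False := by
  have h0 : (leafT l).label [0] = (nodeT l' ts).label [0] := by rw [h]
  rw [nodeT_label_cons] at h0
  rcases h1 : ts[0]? with _ | t
  · rw [List.getElem?_eq_none_iff] at h1
    have : ts.length = 0 := by omega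
    exact hts (List.length_eq_zero_iff.mp this)
  · rw [h1] at h0; simp at h0
    have := t.root_isSome; rw [← h0] at this; simp at this

/-- Every step has source root `(d, none)` and target root `(d, u)` for the
    same configuration `d`. -/
theorem step_roots {t t' : OTree (Judg C R)} (h : Step Rules t t') :
    ∃ d u, t.label [] = some (d, none) ∧ t'.label [] = some (d, u) := by
  induction h with
  | tr1 c r h => exact ⟨c, some r, by simp, by simp⟩
  | tr2 js c res hne h => exact ⟨c, none, by simp, by simp⟩
  | tr3 js c res trs h hlen hroots => exact ⟨c, some res, by simp, by simp⟩
  | tr4 js c res trs h hne hlt hroots => exact ⟨c, none, by simp, by simp⟩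
  | tr5 js c res trs t t' h hlt hroots hconf hstep ih => exact ⟨c, none, by simp, by simp⟩

theorem no_step_of_complete {t t' : OTree (Judg C R)} {d : C} {r : R}
    (hroot : t.label [] = some (d, some r)) (h : Step Rules t t') : False := by
  obtain ⟨d', u, h1, _⟩ := step_roots h
  rw [hroot] at h1; simp at h1

theorem rtg_root_cfg {a b : OTree (Judg C R)} {d : C} {u : Option R}
    (h : Relation.ReflTransGen (Step Rules) a b) (ha : a.label [] = some (d, u)) :
    ∃ u', b.label [] = some (d, u') := by
  induction h with
  | refl => exact ⟨u, ha⟩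
  | tail h1 h2 ih =>
    obtain ⟨u', hu'⟩ := ih
    obtain ⟨d', u'', hs, ht⟩ := step_roots h2
    rw [hu'] at hs
    simp at hs
    exact ⟨u'', by rw [ht, hs.1]⟩

theorem take_concat_getElem {α : Type*} (l : List α) (n : ℕ) (h : l.length = n + 1) :
    l.take n ++ [l[n]'(by omega)] = l := by
  have h1 := List.take_succ (l := l) (i := n)
  rw [List.getElem?_eq_getElem (show n < l.length by omega)] at h1
  rw [List.take_of_length_le (le_of_eq h)] at h1
  simp only [Option.toList_some] at h1
  exact h1.symm

/-- Lift a run of the last subtree through `tr5`. -/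
theorem lift_run {js : List (C × R)} {c : C} {res : R} (h : (js, (c, res)) ∈ Rules)
    (trs : List (OTree (Judg C R))) (hlt : trs.length < js.length)
    (hroots : ∀ (k : ℕ) (hk : k < trs.length), ∃ s, trs[k]? = some s ∧
      s.label [] = some (liftJ (js[k]'(Nat.lt_trans hk hlt))))
    {a b : OTree (Judg C R)}
    (ha : a.label [] = some ((js[trs.length]'hlt).1, none))
    (hab : Relation.ReflTransGen (Step Rules) a b) :
    Relation.ReflTransGen (Step Rules)
      (nodeT (c, none) (trs ++ [a])) (nodeT (c, none) (trs ++ [b])) := by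
  induction hab with
  | refl => exact .refl
  | @tail b' b h1 h2 ih =>
    refine ih.tail ?_
    obtain ⟨u', hb'⟩ := rtg_root_cfg h1 ha
    obtain ⟨d, u, hs, _⟩ := step_roots h2
    rw [hb'] at hs
    simp at hs
    exact Step.tr5 js c res trs b' b h hlt hroots (by rw [hb', hs.2]) h2

/-- Build the run assembling complete subtrees for the first `i` premises and
    opening the `(i+1)`-th premise. -/
theorem build_run {js : List (C × R)} {c : C} {res : R} (h : (js, (c, res)) ∈ Rules) :
    ∀ (i : ℕ) (hi : i < js.length) (Ts : List (OTree (Judg C R))) (hTl : Ts.length = i)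
    (hTs : ∀ (k : ℕ) (hk : k < i), ∃ t, Ts[k]? = some t ∧
      Relation.ReflTransGen (Step Rules) (leafT ((js[k]'(hk.trans hi)).1, none)) t ∧
      t.label [] = some (liftJ (js[k]'(hk.trans hi)))),
    Relation.ReflTransGen (Step Rules) (leafT ((c, none) : Judg C R))
      (nodeT (c, none) (Ts ++ [leafT ((js[i]'hi).1, none)])) := by
  intro i
  induction i with
  | zero =>
    intro hi Ts hTl hTs
    have hTs0 : Ts = [] := List.length_eq_zero_iff.mp hTl
    subst hTs0
    have hne : js ≠ [] := by intro h'; subst h'; simp at hi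
    have hstep := Step.tr2 js c res hne h
    rw [List.head_eq_getElem] at hstep
    simpa using Relation.ReflTransGen.single hstep
  | succ n ih =>
    intro hi Ts hTl hTs
    obtain ⟨tn, htn?, htnrun, htnroot⟩ := hTs n (Nat.lt_succ_self n)
    have hn : n < js.length := Nat.lt_of_succ_lt hi
    have hTt : (Ts.take n).length = n := by simp [hTl]
    have h1 := ih hn (Ts.take n) hTt (by
      intro k hk
      obtain ⟨t, ht?, htr, hto⟩ := hTs k (hk.trans (Nat.lt_succ_self n))
      exact ⟨t, by simp [List.getElem?_take, hk, ht?], htr, hto⟩)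
    have hlt' : (Ts.take n).length < js.length := by rw [hTt]; exact hn
    have hlt'' : Ts.length < js.length := by rw [hTl]; exact hi
    have hroots' : ∀ (k : ℕ) (hk : k < (Ts.take n).length), ∃ s, (Ts.take n)[k]? = some s ∧
        s.label [] = some (liftJ (js[k]'(Nat.lt_trans hk hlt'))) := by
      intro k hk
      rw [hTt] at hk
      obtain ⟨t, ht?, _, hto⟩ := hTs k (hk.trans (Nat.lt_succ_self n))
      exact ⟨t, by simp [List.getElem?_take, hk, ht?], hto⟩
    have h2 := lift_run h (Ts.take n) hlt' hroots'
      (a := leafT ((js[n]'hn).1, none)) (b := tn) (by simp [hTt]) htnrun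
    have hTeq : Ts.take n ++ [tn] = Ts := by
      have : Ts[n]'(by omega) = tn := by
        have := List.getElem?_eq_getElem (l := Ts) (i := n) (show n < Ts.length by omega)
        rw [htn?] at this; exact (Option.some_injective _ this).symm
      rw [← this]
      exact take_concat_getElem Ts n hTl
    have h2' : Relation.ReflTransGen (Step Rules)
        (nodeT (c, none) (Ts.take n ++ [leafT ((js[n]'hn).1, none)]))
        (nodeT (c, none) Ts) := by
      rw [← hTeq]
      convert h2 using 5 <;> simp [hTt]
    have hroots'' : ∀ (k : ℕ) (hk : k < Ts.length), ∃ s, Ts[k]? = some s ∧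
        s.label [] = some (liftJ (js[k]'(Nat.lt_trans hk hlt''))) := by
      intro k hk
      rw [hTl] at hk
      obtain ⟨t, ht?, _, hto⟩ := hTs k hk
      exact ⟨t, ht?, hto⟩
    have h3 := Step.tr4 js c res Ts h (by
        intro h'; subst h'; simp at hTl) hlt'' hroots''
    have h4 : Relation.ReflTransGen (Step Rules)
        (nodeT (c, none) Ts) (nodeT (c, none) (Ts ++ [leafT ((js[n+1]'hi).1, none)])) := by
      refine Relation.ReflTransGen.single ?_
      convert h3 using 5 <;> simp [hTl]
    exact (h1.trans h2').trans h4

theorem concat_inj' {α : Type*} {l₁ l₂ : List α} {a b : α} (h : l₁ ++ [a] = l₂ ++ [b]) :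
    l₁ = l₂ ∧ a = b :=
  List.concat_inj.mp (by simpa [List.concat] using h)

theorem step_leafT_inv {d : C} {t' : OTree (Judg C R)}
    (h : Step Rules (leafT ((d, none) : Judg C R)) t') :
    ∃ js res, (js, (d, res)) ∈ Rules := by
  generalize hsrc : leafT ((d, none) : Judg C R) = src at h
  have hlab : ∀ (t : OTree (Judg C R)), leafT ((d, none) : Judg C R) = t →
      t.label [] = some (d, none) := by rintro t rfl; simp
  cases h with
  | tr1 c r hR =>
    have := hlab _ hsrc; simp at this
    exact ⟨[], r, by rw [← this]; exact hR⟩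
  | tr2 js c res hne hR =>
    have := hlab _ hsrc; simp at this
    exact ⟨js, res, by rw [← this]; exact hR⟩
  | tr3 js c res trs hR hlen hroots =>
    have := hlab _ hsrc; simp at this
    exact ⟨js, res, by rw [← this]; exact hR⟩
  | tr4 js c res trs hR hne hlt hroots =>
    have := hlab _ hsrc; simp at this
    exact ⟨js, res, by rw [← this]; exact hR⟩
  | tr5 js c res trs t t'' hR hlt hroots hconf hstep =>
    have := hlab _ hsrc; simp at this
    exact ⟨js, res, by rw [← this]; exact hR⟩

theorem step_leafT_inv' {d : C} {t' : OTree (Judg C R)}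
    (h : Step Rules (leafT ((d, none) : Judg C R)) t')
    {c : C} (hcd : d = c) : ∃ js res, (js, (c, res)) ∈ Rules := by
  subst hcd; exact step_leafT_inv h

/-- Inversion of a step out of a node tree whose root is incomplete and whose
    children list is `Ts ++ [S]`. -/
theorem step_nodeT_last_inv {c : C} {Ts : List (OTree (Judg C R))} {S t' : OTree (Judg C R)}
    (h : Step Rules (nodeT ((c, none) : Judg C R) (Ts ++ [S])) t') :
    (∃ (js : List (C × R)) (res : R) (hlt : Ts.length < js.length),
        (js, (c, res)) ∈ Rules ∧
        (∀ (k : ℕ) (hk : k < Ts.length), ∃ s, Ts[k]? = some s ∧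
          s.label [] = some (liftJ (js[k]'(hk.trans hlt)))) ∧
        S.label [] = some (liftJ (js[Ts.length]'hlt)))
    ∨ (∃ (d : C) (S' : OTree (Judg C R)), S.label [] = some (d, none) ∧ Step Rules S S') := by
  generalize hsrc : nodeT ((c, none) : Judg C R) (Ts ++ [S]) = src at h
  cases h with
  | tr1 c₁ r hR => exact absurd hsrc.symm (not_leafT_eq_nodeT (by simp))
  | tr2 js c₁ res hne hR => exact absurd hsrc.symm (not_leafT_eq_nodeT (by simp))
  | tr3 js c₁ res trs hR hlen hroots =>
    obtain ⟨hcc, hts⟩ := nodeT_inj hsrc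
    obtain ⟨hc1, -⟩ := Prod.mk.injEq .. ▸ hcc
    subst hc1
    have hlenT : trs.length = Ts.length + 1 := by rw [← hts]; simp
    have hlt : Ts.length < js.length := by omega
    refine Or.inl ⟨js, res, hlt, hR, ?_, ?_⟩
    · intro k hk
      obtain ⟨s, hs1, hs2⟩ := hroots k (by omega)
      refine ⟨s, ?_, hs2⟩
      rw [← hs1, ← hts]
      simp [List.getElem?_append, hk]
    · obtain ⟨s, hs1, hs2⟩ := hroots Ts.length (by omega)
      rw [← hts, List.getElem?_concat_length] at hs1
      rw [Option.some_inj.mp hs1]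
      exact hs2
  | tr4 js c₁ res trs hR hne hlt hroots =>
    obtain ⟨hcc, hts⟩ := nodeT_inj hsrc
    obtain ⟨hc1, -⟩ := Prod.mk.injEq .. ▸ hcc
    subst hc1
    have hlenT : trs.length = Ts.length + 1 := by rw [← hts]; simp
    have hlt' : Ts.length < js.length := by omega
    refine Or.inl ⟨js, res, hlt', hR, ?_, ?_⟩
    · intro k hk
      obtain ⟨s, hs1, hs2⟩ := hroots k (by omega)
      refine ⟨s, ?_, hs2⟩
      rw [← hs1, ← hts]
      simp [List.getElem?_append, hk]
    · obtain ⟨s, hs1, hs2⟩ := hroots Ts.length (by omega)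
      rw [← hts, List.getElem?_concat_length] at hs1
      rw [Option.some_inj.mp hs1]
      exact hs2
  | tr5 js c₁ res trs t t'' hR hlt hroots hconf hstep =>
    obtain ⟨hcc, hts⟩ := nodeT_inj hsrc
    obtain ⟨htrs, ht⟩ := concat_inj' hts
    subst ht
    exact Or.inr ⟨(js[trs.length]'hlt).1, t'', hconf, hstep⟩

/-- `j` is derivable-as-observed: the initial tree for its configuration
    reaches a tree with root `j`, which moreover is stuck if `j` is
    incomplete. -/
def Good (Rules : Set (List (C × R) × (C × R))) (j : Judg C R) : Prop :=
  ∃ T : OTree (Judg C R),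
    Relation.ReflTransGen (Step Rules) (leafT ((j.1, none) : Judg C R)) T ∧
    T.label [] = some j ∧ (j.2 = none → ¬ ∃ t', Step Rules T t')

theorem mk_Ts {js : List (C × R)} {i : ℕ} (hi : i ≤ js.length)
    (hp : ∀ (k : ℕ) (hk : k < i), Good Rules (liftJ (js[k]'(lt_of_lt_of_le hk hi)))) :
    ∃ Ts : List (OTree (Judg C R)), Ts.length = i ∧
      ∀ (k : ℕ) (hk : k < i), ∃ t, Ts[k]? = some t ∧
        Relation.ReflTransGen (Step Rules)
          (leafT (((js[k]'(lt_of_lt_of_le hk hi)).1, none) : Judg C R)) t ∧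
        t.label [] = some (liftJ (js[k]'(lt_of_lt_of_le hk hi))) := by
  have hch : ∀ k : Fin i, ∃ t : OTree (Judg C R),
      Relation.ReflTransGen (Step Rules)
        (leafT (((js[k.1]'(lt_of_lt_of_le k.2 hi)).1, none) : Judg C R)) t ∧
      t.label [] = some (liftJ (js[k.1]'(lt_of_lt_of_le k.2 hi))) := by
    intro k
    obtain ⟨T, h1, h2, -⟩ := hp k.1 k.2
    exact ⟨T, h1, h2⟩
  choose f h1 h2 using hch
  refine ⟨List.ofFn f, by simp, ?_⟩
  intro k hk
  exact ⟨f ⟨k, hk⟩, by simp [List.getElem?_ofFn, hk], h1 ⟨k, hk⟩, h2 ⟨k, hk⟩⟩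

theorem forward_good {j : Judg C R} (h : IndDerives (RulesWr Rules) j) :
    Good Rules j := by
  induction h with
  | node ps j hrule hprem ih =>
    rcases hrule with ⟨js, c, res, hR, hps⟩ | ⟨c, hno, hps⟩
      | ⟨js, c, res, i, hi, r', hR, hnag, hps⟩ | ⟨js, c, res, i, hi, hR, hps⟩
    · -- original rule, j = (c, some res)
      obtain ⟨hps1, hps2⟩ := Prod.mk.injEq .. ▸ hps
      subst hps2
      rcases eq_or_ne js [] with hjs | hjs
      · subst hjs
        subst hps1
        refine ⟨leafT (c, some res), Relation.ReflTransGen.single (Step.tr1 c res hR),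
          by simp, by simp⟩
      · have hlen : js.length - 1 < js.length := by
          have := List.length_pos_iff.mpr hjs; omega
        set n := js.length - 1 with hn
        have hp : ∀ (k : ℕ) (hk : k < n), Good Rules (liftJ (js[k]'(by omega))) := by
          intro k hk
          apply ih
          rw [hps1]
          exact List.mem_map_of_mem (f := liftJ) (js.getElem_mem (by omega))
        obtain ⟨Ts, hTl, hTs⟩ := mk_Ts (le_of_lt hlen) hp
        have h1 := build_run hR n hlen Ts hTl (fun k hk => hTs k hk)
        obtain ⟨Tn, hTn1, hTn2, -⟩ := (by
          apply ih
          rw [hps1]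
          exact List.mem_map_of_mem (f := liftJ) (js.getElem_mem hlen) : Good Rules (liftJ (js[n]'hlen)))
        have hlt' : Ts.length < js.length := by omega
        have hroots : ∀ (k : ℕ) (hk : k < Ts.length), ∃ s, Ts[k]? = some s ∧
            s.label [] = some (liftJ (js[k]'(Nat.lt_trans hk hlt'))) := by
          intro k hk
          obtain ⟨t, ht1, -, ht3⟩ := hTs k (by omega)
          exact ⟨t, ht1, ht3⟩
        have h2 := lift_run hR Ts hlt' hroots
          (a := leafT ((js[n]'hlen).1, none)) (b := Tn) (by simp [hTl]) hTn1
        have h2' : Relation.ReflTransGen (Step Rules)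
            (nodeT (c, none) (Ts ++ [leafT ((js[n]'hlen).1, none)]))
            (nodeT (c, none) (Ts ++ [Tn])) := by convert h2 using 6 <;> simp [hTl]
        have h3 : Step Rules (nodeT (c, none) (Ts ++ [Tn])) (nodeT (c, some res) (Ts ++ [Tn])) := by
          refine Step.tr3 js c res (Ts ++ [Tn]) hR (by simp only [List.length_append, List.length_cons, List.length_nil, hTl]; omega) ?_
          intro k hk
          rcases Nat.lt_or_ge k Ts.length with hk' | hk'
          · obtain ⟨s, hs1, hs2⟩ := hroots k hk'
            exact ⟨s, by rw [List.getElem?_append_left hk', hs1], hs2⟩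
          · have hkn : k = Ts.length := by omega
            subst hkn
            refine ⟨Tn, List.getElem?_concat_length .., ?_⟩
            rw [hTn2]
            simp only [hTl]
        refine ⟨nodeT (c, some res) (Ts ++ [Tn]), ((h1.trans h2').tail h3), by simp, by simp⟩
    · -- wrong-configuration axiom
      obtain ⟨hps1, hps2⟩ := Prod.mk.injEq .. ▸ hps
      subst hps2
      refine ⟨leafT (c, none), .refl, by simp, ?_⟩
      rintro - ⟨t', hstep⟩
      exact hno (step_leafT_inv hstep)
    · -- wrong-result rule
      obtain ⟨hps1, hps2⟩ := Prod.mk.injEq .. ▸ hps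
      subst hps2
      have hp : ∀ (k : ℕ) (hk : k < i), Good Rules (liftJ (js[k]'(by omega))) := by
        intro k hk
        apply ih
        rw [hps1]
        apply List.mem_append_left
        refine List.mem_map_of_mem (f := liftJ) ?_
        have : (js.take i)[k]'(by simp; omega) = js[k]'(by omega) := List.getElem_take ..
        rw [← this]
        exact List.getElem_mem _
      obtain ⟨Ts, hTl, hTs⟩ := mk_Ts (le_of_lt hi) hp
      have h1 := build_run hR i hi Ts hTl (fun k hk => hTs k hk)
      obtain ⟨T', hT'1, hT'2, -⟩ := (by
        apply ih
        rw [hps1]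
        exact List.mem_append_right _ (by simp) : Good Rules ((js[i]'hi).1, some r'))
      have hlt' : Ts.length < js.length := by omega
      have hroots : ∀ (k : ℕ) (hk : k < Ts.length), ∃ s, Ts[k]? = some s ∧
          s.label [] = some (liftJ (js[k]'(Nat.lt_trans hk hlt'))) := by
        intro k hk
        obtain ⟨t, ht1, -, ht3⟩ := hTs k (by omega)
        exact ⟨t, ht1, ht3⟩
      have h2 := lift_run hR Ts hlt' hroots
        (a := leafT ((js[i]'hi).1, none)) (b := T') (by simp [hTl]) hT'1
      have h2' : Relation.ReflTransGen (Step Rules)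
          (nodeT (c, none) (Ts ++ [leafT ((js[i]'hi).1, none)]))
          (nodeT (c, none) (Ts ++ [T'])) := by convert h2 using 6 <;> simp [hTl]
      refine ⟨nodeT (c, none) (Ts ++ [T']), h1.trans h2', by simp, ?_⟩
      rintro - ⟨t', hstep⟩
      rcases step_nodeT_last_inv hstep with
        ⟨js₁, res₁, hlt₁, hR₁, hroots₁, hSroot⟩ | ⟨d, S', hSroot, hSstep⟩
      · -- agreeing rule exists: contradiction with hnag
        apply hnag
        have hTi : Ts.length = i := hTl
        refine ⟨js₁, res₁, by omega, hR₁, ?_, ?_, ?_⟩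
        · apply List.ext_getElem (by simp; omega)
          intro k hk1 hk2
          have hk : k < i := by simp at hk1; omega
          obtain ⟨s, hs1, hs2⟩ := hroots₁ k (by omega)
          obtain ⟨s', hs1', -, hs2'⟩ := hTs k hk
          rw [hs1] at hs1'
          have hss : s = s' := Option.some_inj.mp hs1'
          subst hss
          rw [hs2] at hs2'
          have := liftJ_inj (Option.some_inj.mp hs2')
          rw [List.getElem_take, List.getElem_take]
          rw [this]
        · rw [hT'2] at hSroot
          simp only [liftJ, Option.some_inj, Prod.mk.injEq] at hSroot
          have e : js₁[i]'(by omega) = js₁[Ts.length]'(by omega) := by congr 1; omega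
          rw [e]
          exact hSroot.1.symm
        · rw [hT'2] at hSroot
          simp only [liftJ, Option.some_inj, Prod.mk.injEq] at hSroot
          have e : js₁[i]'(by omega) = js₁[Ts.length]'(by omega) := by congr 1; omega
          rw [e]
          exact hSroot.2.symm
      · rw [hT'2] at hSroot
        simp at hSroot
    · -- wrong-propagation rule
      obtain ⟨hps1, hps2⟩ := Prod.mk.injEq .. ▸ hps
      subst hps2
      have hp : ∀ (k : ℕ) (hk : k < i), Good Rules (liftJ (js[k]'(by omega))) := by
        intro k hk
        apply ih
        rw [hps1]
        apply List.mem_append_left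
        refine List.mem_map_of_mem (f := liftJ) ?_
        have : (js.take i)[k]'(by simp; omega) = js[k]'(by omega) := List.getElem_take ..
        rw [← this]
        exact List.getElem_mem _
      obtain ⟨Ts, hTl, hTs⟩ := mk_Ts (le_of_lt hi) hp
      have h1 := build_run hR i hi Ts hTl (fun k hk => hTs k hk)
      obtain ⟨S, hS1, hS2, hS3⟩ := (by
        apply ih
        rw [hps1]
        exact List.mem_append_right _ (by simp) : Good Rules ((js[i]'hi).1, none))
      have hS3' := hS3 rfl
      have hlt' : Ts.length < js.length := by omega
      have hroots : ∀ (k : ℕ) (hk : k < Ts.length), ∃ s, Ts[k]? = some s ∧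
          s.label [] = some (liftJ (js[k]'(Nat.lt_trans hk hlt'))) := by
        intro k hk
        obtain ⟨t, ht1, -, ht3⟩ := hTs k (by omega)
        exact ⟨t, ht1, ht3⟩
      have h2 := lift_run hR Ts hlt' hroots
        (a := leafT ((js[i]'hi).1, none)) (b := S) (by simp [hTl]) hS1
      have h2' : Relation.ReflTransGen (Step Rules)
          (nodeT (c, none) (Ts ++ [leafT ((js[i]'hi).1, none)]))
          (nodeT (c, none) (Ts ++ [S])) := by convert h2 using 6 <;> simp [hTl]
      refine ⟨nodeT (c, none) (Ts ++ [S]), h1.trans h2', by simp, ?_⟩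
      rintro - ⟨t', hstep⟩
      rcases step_nodeT_last_inv hstep with
        ⟨js₁, res₁, hlt₁, hR₁, hroots₁, hSroot⟩ | ⟨d, S', hSroot, hSstep⟩
      · rw [hS2] at hSroot
        simp [liftJ] at hSroot
      · exact hS3' ⟨S', hSstep⟩

/-- Invariant maintained by the transition relation. -/
inductive StInv (Rules : Set (List (C × R) × (C × R))) : OTree (Judg C R) → Prop where
  | leaf (d : C) : StInv Rules (leafT (d, none))
  | node (js : List (C × R)) (c : C) (res : R) (Ts : List (OTree (Judg C R)))
      (S : OTree (Judg C R))
      (hR : (js, (c, res)) ∈ Rules) (hlt : Ts.length < js.length)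
      (hTs : ∀ (k : ℕ) (hk : k < Ts.length), ∃ t, Ts[k]? = some t ∧
        t.label [] = some (liftJ (js[k]'(hk.trans hlt))) ∧
        IndDerives (RulesWr Rules) (liftJ (js[k]'(hk.trans hlt))))
      (hS : ∃ u, S.label [] = some ((js[Ts.length]'hlt).1, u))
      (hSc : ∀ r : R, S.label [] = some ((js[Ts.length]'hlt).1, some r) →
        IndDerives (RulesWr Rules) (((js[Ts.length]'hlt).1, some r) : Judg C R))
      (hSi : StInv Rules S) :
      StInv Rules (nodeT ((c, none) : Judg C R) (Ts ++ [S]))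
  | done (d : C) (r : R) (t : OTree (Judg C R)) (ht : t.label [] = some (d, some r))
      (hd : IndDerives (RulesWr Rules) ((d, some r) : Judg C R)) : StInv Rules t

theorem inv_complete {t : OTree (Judg C R)} (h : StInv Rules t) {d : C} {r : R}
    (hroot : t.label [] = some (d, some r)) :
    IndDerives (RulesWr Rules) ((d, some r) : Judg C R) := by
  cases h with
  | leaf d' => simp at hroot
  | node js c res Ts S hR hlt hTs hS hSc hSi => simp at hroot
  | done d' r' t ht hd =>
    rw [ht] at hroot
    simp at hroot
    rw [hroot.1, hroot.2] at hd
    exact hd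

theorem inv_nodeT_inv {c : C} {trs : List (OTree (Judg C R))}
    (h : StInv Rules (nodeT ((c, none) : Judg C R) trs)) :
    trs = [] ∨ ∃ (Ts : List (OTree (Judg C R))) (S : OTree (Judg C R))
      (js : List (C × R)) (res : R) (hlt : Ts.length < js.length),
      trs = Ts ++ [S] ∧ (js, (c, res)) ∈ Rules ∧
      (∀ (k : ℕ) (hk : k < Ts.length), ∃ t, Ts[k]? = some t ∧
        t.label [] = some (liftJ (js[k]'(hk.trans hlt))) ∧
        IndDerives (RulesWr Rules) (liftJ (js[k]'(hk.trans hlt)))) ∧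
      (∃ u, S.label [] = some ((js[Ts.length]'hlt).1, u)) ∧
      (∀ r : R, S.label [] = some ((js[Ts.length]'hlt).1, some r) →
        IndDerives (RulesWr Rules) (((js[Ts.length]'hlt).1, some r) : Judg C R)) ∧
      StInv Rules S := by
  generalize hsrc : nodeT ((c, none) : Judg C R) trs = w at h
  cases h with
  | leaf d =>
    left
    by_contra hne
    exact not_leafT_eq_nodeT hne hsrc.symm
  | node js c₁ res Ts S hR hlt hTs hS hSc hSi =>
    obtain ⟨hcc, hts⟩ := nodeT_inj hsrc
    obtain ⟨hc1, -⟩ := Prod.mk.injEq .. ▸ hcc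
    subst hc1
    exact Or.inr ⟨Ts, S, js, res, hlt, hts, hR, hTs, hS, hSc, hSi⟩
  | done d r t ht hd =>
    rw [← hsrc] at ht
    simp at ht

/-- Transfer of derivability of the completed children, from the invariant's
    recorded rule to any rule whose premises match the children roots. -/
theorem inv_roots_derive {c : C} {trs : List (OTree (Judg C R))}
    (hinv : StInv Rules (nodeT ((c, none) : Judg C R) trs))
    {js : List (C × R)} (hle : trs.length ≤ js.length)
    (hroots : ∀ (k : ℕ) (hk : k < trs.length), ∃ s, trs[k]? = some s ∧
      s.label [] = some (liftJ (js[k]'(lt_of_lt_of_le hk hle)))) :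
    ∀ (k : ℕ) (hk : k < trs.length),
      IndDerives (RulesWr Rules) (liftJ (js[k]'(lt_of_lt_of_le hk hle))) := by
  intro k hk
  rcases inv_nodeT_inv hinv with rfl | ⟨Ts, S, js₀, res₀, hlt₀, rfl, hR₀, hTs₀, hS₀, hSc₀, hSi₀⟩
  · simp at hk
  · have hlen : (Ts ++ [S]).length = Ts.length + 1 := by simp
    rcases Nat.lt_or_ge k Ts.length with hk' | hk'
    · obtain ⟨s, hs1, hs2⟩ := hroots k hk
      obtain ⟨t, ht1, ht2, ht3⟩ := hTs₀ k hk'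
      rw [List.getElem?_append, if_pos hk', ht1] at hs1
      have hst : s = t := (Option.some_inj.mp hs1).symm
      subst hst
      rw [ht2] at hs2
      have := liftJ_inj (Option.some_inj.mp hs2)
      rw [← this]
      exact ht3
    · have hkT : k = Ts.length := by rw [hlen] at hk; omega
      subst hkT
      obtain ⟨s, hs1, hs2⟩ := hroots Ts.length hk
      rw [List.getElem?_concat_length] at hs1
      have hst : s = S := (Option.some_inj.mp hs1).symm
      subst hst
      obtain ⟨u, hu⟩ := hS₀
      rw [hs2] at hu
      simp only [liftJ, Option.some_inj, Prod.mk.injEq] at hu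
      have hder := hSc₀ ((js[Ts.length]'(lt_of_lt_of_le hk hle)).2) (by
        rw [hs2]
        simp only [liftJ, Option.some_inj, Prod.mk.injEq]
        exact ⟨hu.1, trivial⟩)
      have : (((js₀[Ts.length]'hlt₀).1, some (js[Ts.length]'(lt_of_lt_of_le hk hle)).2) : Judg C R)
          = liftJ (js[Ts.length]'(lt_of_lt_of_le hk hle)) := by
        simp [liftJ, hu.1]
      rwa [this] at hder

theorem inv_step {t t' : OTree (Judg C R)} (hstep : Step Rules t t')
    (hinv : StInv Rules t) : StInv Rules t' := by
  induction hstep with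
  | tr1 c r hR =>
    exact StInv.done c r _ (by simp)
      (IndDerives.node [] _ (Or.inl ⟨[], c, r, hR, by simp⟩) (by simp))
  | tr2 js c res hne hR =>
    have h0 : 0 < js.length := List.length_pos_iff.mpr hne
    have : StInv Rules (nodeT ((c, none) : Judg C R)
        (([] : List (OTree (Judg C R))) ++ [leafT ((js[0]'h0).1, none)])) := by
      refine StInv.node js c res [] _ hR (by simpa using h0) ?_ ⟨none, by simp⟩ ?_ (StInv.leaf _)
      · intro k hk; simp at hk
      · intro r hr; simp at hr
    simpa [List.head_eq_getElem] using this
  | tr3 js c res trs hR hlen hroots =>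
    have hle : trs.length ≤ js.length := le_of_eq hlen
    have hroots' : ∀ (k : ℕ) (hk : k < trs.length), ∃ s, trs[k]? = some s ∧
        s.label [] = some (liftJ (js[k]'(lt_of_lt_of_le hk hle))) := by
      intro k hk
      exact hroots k (by omega)
    have hder := inv_roots_derive hinv hle hroots'
    refine StInv.done c res _ (by simp) ?_
    refine IndDerives.node (js.map liftJ) _ (Or.inl ⟨js, c, res, hR, rfl⟩) ?_
    intro p hp
    obtain ⟨a, ha, rfl⟩ := List.mem_map.mp hp
    obtain ⟨k, hk, rfl⟩ := List.mem_iff_getElem.mp ha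
    exact hder k (by omega)
  | tr4 js c res trs hR hne hlt hroots =>
    have hle : trs.length ≤ js.length := le_of_lt hlt
    have hroots' : ∀ (k : ℕ) (hk : k < trs.length), ∃ s, trs[k]? = some s ∧
        s.label [] = some (liftJ (js[k]'(lt_of_lt_of_le hk hle))) := fun k hk => hroots k hk
    have hder := inv_roots_derive hinv hle hroots'
    refine StInv.node js c res trs _ hR hlt ?_ ⟨none, by simp⟩ ?_ (StInv.leaf _)
    · intro k hk
      obtain ⟨s, hs1, hs2⟩ := hroots k hk
      exact ⟨s, hs1, hs2, hder k hk⟩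
    · intro r hr; simp at hr
  | tr5 js c res trs t t'' hR hlt hroots hconf hstep ih =>
    rcases inv_nodeT_inv hinv with habs | ⟨Ts, S, js₀, res₀, hlt₀, hts, hR₀, hTs₀, hS₀, hSc₀, hSi₀⟩
    · exact absurd habs (by simp)
    · obtain ⟨htrs, htS⟩ := concat_inj' hts.symm
      subst htrs
      rcases htS with rfl
      have hinvS' : StInv Rules t'' := ih hSi₀
      obtain ⟨d, u, hs1, hs2⟩ := step_roots hstep
      obtain ⟨u₀, hu₀⟩ := hS₀
      rw [hu₀] at hs1
      simp only [Option.some_inj, Prod.mk.injEq] at hs1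
      refine StInv.node js₀ c res₀ Ts t'' hR₀ hlt₀ hTs₀ ⟨u, by rw [hs2, hs1.1]⟩ ?_ hinvS'
      intro r hr
      exact inv_complete hinvS' hr

theorem inv_rtg {t t' : OTree (Judg C R)} (h : Relation.ReflTransGen (Step Rules) t t')
    (hinv : StInv Rules t) : StInv Rules t' := by
  induction h with
  | refl => exact hinv
  | tail h1 h2 ih => exact inv_step h2 ih

theorem inv_stuck {t : OTree (Judg C R)} (hinv : StInv Rules t) :
    (¬ ∃ t', Step Rules t t') → ∀ d : C, t.label [] = some (d, none) →
    IndDerives (RulesWr Rules) ((d, none) : Judg C R) := by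
  induction hinv with
  | leaf d' =>
    intro hirr d hroot
    simp only [leafT_label, if_pos rfl, Option.some_inj, Prod.mk.injEq] at hroot
    obtain ⟨rfl, -⟩ := hroot
    refine IndDerives.node [] _ (Or.inr (Or.inl ⟨d', ?_, rfl⟩)) (by simp)
    rintro ⟨js, res, hR⟩
    rcases eq_or_ne js [] with hjs | hjs
    · subst hjs
      exact hirr ⟨_, Step.tr1 d' res hR⟩
    · exact hirr ⟨_, Step.tr2 js d' res hjs hR⟩
  | node js c res Ts S hR hlt hTs hS hSc hSi ihS =>
    intro hirr d hroot
    simp only [nodeT_label_nil, Option.some_inj, Prod.mk.injEq] at hroot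
    obtain ⟨rfl, -⟩ := hroot
    obtain ⟨u, hSu⟩ := hS
    have hroots0 : ∀ (k : ℕ) (hk : k < Ts.length), ∃ s, Ts[k]? = some s ∧
        s.label [] = some (liftJ (js[k]'(hk.trans hlt))) := by
      intro k hk
      obtain ⟨s, h1, h2, -⟩ := hTs k hk
      exact ⟨s, h1, h2⟩
    rcases u with _ | r'
    · -- last child incomplete: it is itself stuck, use wrong-propagation
      have hSirr : ¬ ∃ S', Step Rules S S' := by
        rintro ⟨S', hSstep⟩
        exact hirr ⟨_, Step.tr5 js c res Ts S S' hR hlt hroots0 hSu hSstep⟩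
      have hSd := ihS hSirr _ hSu
      refine IndDerives.node
        ((js.take Ts.length).map liftJ ++ [((js[Ts.length]'hlt).1, none)]) _
        (Or.inr (Or.inr (Or.inr ⟨js, c, res, Ts.length, hlt, hR, rfl⟩))) ?_
      intro p hp
      rcases List.mem_append.mp hp with hp1 | hp2
      · obtain ⟨a, ha, rfl⟩ := List.mem_map.mp hp1
        obtain ⟨k, hk, rfl⟩ := List.mem_iff_getElem.mp ha
        have hk' : k < Ts.length := by simp at hk; omega
        obtain ⟨-, -, -, hder⟩ := hTs k hk'
        rw [List.getElem_take]
        exact hder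
      · simp at hp2
        rw [hp2]
        exact hSd
    · -- last child complete with result r': wrong-result rule
      have hnag : ¬ AgreeUpTo Rules js c Ts.length hlt r' := by
        rintro ⟨js', res', hi', hR', htake, h1, h2⟩
        apply hirr
        have hroots' : ∀ (k : ℕ) (hk : k < js'.length),
            k < (Ts ++ [S]).length → ∃ s, (Ts ++ [S])[k]? = some s ∧
            s.label [] = some (liftJ (js'[k]'hk)) := by
          intro k hk hkl
          simp at hkl
          rcases Nat.lt_or_ge k Ts.length with hk' | hk'
          · obtain ⟨s, h1', h2'⟩ := hroots0 k hk'
            refine ⟨s, by rw [List.getElem?_append_left hk', h1'], ?_⟩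
            have hjs : js'[k]'hk = js[k]'(by omega) := by
              have q := congrArg (fun l : List (C × R) => l[k]?) htake
              simp only [List.getElem?_take, hk', if_pos] at q
              rw [List.getElem?_eq_getElem hk,
                List.getElem?_eq_getElem (show k < js.length by omega)] at q
              exact Option.some_inj.mp q
            rw [h2', hjs]
          · have hkT : k = Ts.length := by omega
            subst hkT
            refine ⟨S, List.getElem?_concat_length .., ?_⟩
            rw [hSu]
            simp only [liftJ, Option.some_inj, Prod.mk.injEq]
            exact ⟨h1.symm, by rw [h2]⟩
        rcases eq_or_lt_of_le (show (Ts ++ [S]).length ≤ js'.length by simp; omega)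
          with heq | hlt'
        · exact ⟨_, Step.tr3 js' c res' (Ts ++ [S]) hR' heq
            (fun k hk => hroots' k hk (by omega))⟩
        · exact ⟨_, Step.tr4 js' c res' (Ts ++ [S]) hR' (by simp) hlt'
            (fun k hk => hroots' k (by omega) hk)⟩
      refine IndDerives.node
        ((js.take Ts.length).map liftJ ++ [((js[Ts.length]'hlt).1, some r')]) _
        (Or.inr (Or.inr (Or.inl ⟨js, c, res, Ts.length, hlt, r', hR, hnag, rfl⟩))) ?_
      intro p hp
      rcases List.mem_append.mp hp with hp1 | hp2
      · obtain ⟨a, ha, rfl⟩ := List.mem_map.mp hp1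
        obtain ⟨k, hk, rfl⟩ := List.mem_iff_getElem.mp ha
        have hk' : k < Ts.length := by simp at hk; omega
        obtain ⟨-, -, -, hder⟩ := hTs k hk'
        rw [List.getElem_take]
        exact hder
      · simp at hp2
        rw [hp2]
        exact hSc r' hSu
  | done d' r t ht hd =>
    intro hirr d hroot
    rw [ht] at hroot
    simp at hroot

end Aux

/-- correctness of the wrong construction: `c ⇒ wrong` is
    inductively derivable iff the initial partial evaluation tree with single
    node `c ⇒ ?` reaches a stuck tree in finitely many transition steps. -/
theorem wrong_correct {C R : Type}
    (Rules : Set (List (C × R) × (C × R))) (c : C) :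
    IndDerives (RulesWr Rules) ((c, none) : Judg C R) ↔
      ∃ t : OTree (Judg C R),
        Relation.ReflTransGen (Step Rules) (leafT (c, none)) t ∧
        (¬ ∃ t', Step Rules t t') ∧
        (∃ (c' : C), t.label [] = some (c', none)) := by
  constructor
  · intro h
    obtain ⟨T, h1, h2, h3⟩ := forward_good h
    exact ⟨T, h1, h3 rfl, c, h2⟩
  · rintro ⟨t, hrun, hirr, c', hroot⟩
    have hinv := inv_rtg hrun (StInv.leaf c)
    obtain ⟨u, hu⟩ := rtg_root_cfg (d := c) (u := none) hrun (by simp)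
    rw [hroot] at hu
    simp only [Option.some_inj, Prod.mk.injEq] at hu
    obtain ⟨rfl, -⟩ := hu
    exact inv_stuck hinv hirr _ hroot
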